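/- Let 1<p<∞ and γ>n(p−1), and define ω(x):=1+|x|^γ on ℝ^n. Then ω∈A_p^∞(φ), but ω does not belong to the classical Muckenhoupt class A_p. -/

import Mathlib

open MeasureTheory Real Filter Set
open scoped ENNReal Classical

noncomputable section

/-- `ℝ^n`, with the Euclidean norm and Lebesgue measure. -/
abbrev Rn (n : ℕ) : Type := EuclideanSpace ℝ (Fin n)

variable {n m : ℕ}

/-- The cube `Q(c,r)` with center `c` and sidelength `r`. -/
def cube (c : Rn n) (r : ℝ) : Set (Rn n) := {y | ∀ i, |y i - c i| ≤ r / 2}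

/-- The average `f_Q = |Q|⁻¹ ∫_Q f`. -/
def avgOn (Q : Set (Rn n)) (f : Rn n → ℝ) : ℝ := (volume Q).toReal⁻¹ * ∫ y in Q, f y

/-- The normalizing factor `φ(Q)^θ * |Q|` for `Q = Q(c,r)`, where `φ(Q) := 1 + r`. -/
def phiFac (θ : ℝ) (c : Rn n) (r : ℝ) : ℝ := (1 + r) ^ θ * (volume (cube c r)).toReal

/-- The dyadic cube of generation `k` (sidelength `2^k`) indexed by `v`. -/
def dyadicCube (n : ℕ) (k : ℤ) (v : Fin n → ℤ) : Set (Rn n) :=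
  {y | ∀ i, (v i : ℝ) * 2 ^ k ≤ y i ∧ y i < ((v i : ℝ) + 1) * 2 ^ k}

/-- The dyadic maximal operator `M^△_{φ,η}`. -/
def dyadicM (η : ℝ) (f : Rn n → ℝ) (x : Rn n) : ℝ :=
  ⨆ k : ℤ, ⨆ v : Fin n → ℤ, ⨆ _ : x ∈ dyadicCube n k v,
    (((1 + (2:ℝ) ^ k) ^ η * (volume (dyadicCube n k v)).toReal)⁻¹ *
      ∫ y in dyadicCube n k v, |f y|)

/-- The dyadic sharp maximal operator `M^{♯,△}_{φ,η}`. -/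
def dyadicMSharp (η : ℝ) (f : Rn n → ℝ) (x : Rn n) : ℝ :=
  (⨆ k : ℤ, ⨆ v : Fin n → ℤ, ⨆ _ : x ∈ dyadicCube n k v ∧ (2:ℝ) ^ k < 1,
    avgOn (dyadicCube n k v) (fun y => |f y - avgOn (dyadicCube n k v) f|)) +
  ⨆ k : ℤ, ⨆ v : Fin n → ℤ, ⨆ _ : x ∈ dyadicCube n k v ∧ (1:ℝ) ≤ (2:ℝ) ^ k,
    (((1 + (2:ℝ) ^ k) ^ η * (volume (dyadicCube n k v)).toReal)⁻¹ *
      ∫ y in dyadicCube n k v, |f y|)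

/-- `M^△_{δ,φ,η} f := (M^△_{φ,η}(|f|^δ))^{1/δ}`. -/
def dyadicMPow (δ η : ℝ) (f : Rn n → ℝ) (x : Rn n) : ℝ :=
  (dyadicM η (fun y => |f y| ^ δ) x) ^ (1 / δ)

/-- `M^{♯,△}_{δ,φ,η} f := (M^{♯,△}_{φ,η}(|f|^δ))^{1/δ}`. -/
def dyadicMSharpPow (δ η : ℝ) (f : Rn n → ℝ) (x : Rn n) : ℝ :=
  (dyadicMSharp η (fun y => |f y| ^ δ) x) ^ (1 / δ)

/-- The multilinear maximal operator `𝓜_{φ,η}`. -/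
def multiM (η : ℝ) (f : Fin m → Rn n → ℝ) (x : Rn n) : ℝ :=
  ⨆ c : Rn n, ⨆ r : {r : ℝ // 0 < r}, ⨆ _ : x ∈ cube c (r : ℝ),
    ∏ j, (((1 + (r : ℝ)) ^ η * (volume (cube c (r : ℝ))).toReal)⁻¹ *
      ∫ y in cube c (r : ℝ), |f j y|)

/-- `𝓜_{δ,φ,η}(f⃗) := (𝓜_{φ,η}(|f₁|^δ,…,|f_m|^δ))^{1/δ}`. -/
def multiMPow (δ η : ℝ) (f : Fin m → Rn n → ℝ) (x : Rn n) : ℝ :=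
  (multiM η (fun j y => |f j y| ^ δ) x) ^ (1 / δ)

/-- `K_t(z, y⃗) := t^{-mn} K(z/t, y₁/t, …, y_m/t)`. -/
def Kt (K : Rn n → (Fin m → Rn n) → ℝ) (t : ℝ) (z : Rn n) (y : Fin m → Rn n) : ℝ :=
  (t ^ (m * n))⁻¹ * K (t⁻¹ • z) (fun j => t⁻¹ • y j)

/-- The multilinear Littlewood–Paley function `g^*_λ`. -/
def gStar (lam : ℝ) (K : Rn n → (Fin m → Rn n) → ℝ) (f : Fin m → Rn n → ℝ)
    (x : Rn n) : ℝ :=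
  (∫ t in Ioi (0:ℝ), ∫ z : Rn n,
      (t / (‖x - z‖ + t)) ^ ((n : ℝ) * lam) *
        (∫ y : Fin m → Rn n, Kt K t z y * ∏ j, f j (y j)) ^ 2 / t ^ ((n : ℝ) + 1)) ^ (1/2 : ℝ)

/-- The size condition (1.1): for every `N ≥ 0` there is `C > 0` with the stated bound. -/
def SizeCondition (lam : ℝ) (K : Rn n → (Fin m → Rn n) → ℝ) : Prop :=
  ∀ N : ℝ, 0 ≤ N → ∃ C > 0, ∀ (x : Rn n) (y : Fin m → Rn n),
    (∫ t in Ioi (0:ℝ), ∫ z : Rn n,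
        (t / (‖x - z‖ + t)) ^ ((n : ℝ) * lam) * (Kt K t z y) ^ 2 / t ^ ((n : ℝ) + 1)) ^ (1/2 : ℝ)
      ≤ C / ((∑ j, ‖x - y j‖) ^ (m * n) * (1 + ∑ j, ‖x - y j‖) ^ N)

/-- The conjugate exponent `q' = q/(q-1)`. -/
def conjExp (q : ℝ) : ℝ := q / (q - 1)

/-- The annulus `(Δ_{k+2})^m ∖ (Δ_{k+1})^m`, where `Δ_k := Q(x', 2^k √(mn) d)`. -/
def annulus (m : ℕ) (x' : Rn n) (d : ℝ) (k : ℕ) : Set (Fin m → Rn n) :=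
  (univ.pi fun _ : Fin m => cube x' (2 ^ (k + 2) * Real.sqrt (m * n) * d)) \
    (univ.pi fun _ : Fin m => cube x' (2 ^ (k + 1) * Real.sqrt (m * n) * d))

/-- The generalized smoothness condition (1.4), with exponent `q` and constants `C_k`. -/
def GenSmoothness (lam : ℝ) (K : Rn n → (Fin m → Rn n) → ℝ) (q : ℝ) (Ck : ℕ → ℝ) : Prop :=
  ∀ N : ℝ, 0 ≤ N → ∃ C > 0, ∀ (k : ℕ) (x x' : Rn n), x ≠ x' →
    (∫ t in Ioi (0:ℝ), ∫ z : Rn n,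
        (t / (‖z‖ + t)) ^ ((n : ℝ) * lam) *
          (∫ y in annulus m x' ‖x - x'‖ k, |Kt K t (x - z) y - Kt K t (x' - z) y| ^ q) ^ (2 / q)
            / t ^ ((n : ℝ) + 1)) ^ (1/2 : ℝ)
      ≤ C * Ck k * (2:ℝ) ^ (-((k : ℝ) * (m * n)) / conjExp q) *
          ‖x - x'‖ ^ (-((m * n : ℕ) : ℝ) / conjExp q) *
          (1 + (2:ℝ) ^ (k : ℝ) * ‖x - x'‖) ^ (-N)

/-- The weighted Lebesgue norm `‖f‖_{L^p(ω)}`. -/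
def wtLpNorm (p : ℝ) (ω : Rn n → ℝ) (f : Rn n → ℝ) : ℝ :=
  (∫ y, |f y| ^ p * ω y) ^ (1 / p)

/-- The weighted weak Lebesgue norm `‖f‖_{L^{p,∞}(ω)}`. -/
def wtWeakLpNorm (p : ℝ) (ω : Rn n → ℝ) (f : Rn n → ℝ) : ℝ :=
  ⨆ t : {t : ℝ // 0 < t}, (t : ℝ) * (∫ y in {x : Rn n | (t : ℝ) < |f x|}, ω y) ^ (1 / p)

/-- The weak boundedness condition: `g^*_λ` maps `L^{s₁} × ⋯ × L^{s_m}` to `L^{s,∞}` for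
some exponents `1 ≤ s_j ≤ q'` with `1/s = Σ 1/s_j`. -/
def WeakBoundedness (lam : ℝ) (K : Rn n → (Fin m → Rn n) → ℝ) (q' : ℝ) : Prop :=
  ∃ s : Fin m → ℝ, (∀ j, 1 ≤ s j ∧ s j ≤ q') ∧ ∃ C > 0,
    ∀ f : Fin m → Rn n → ℝ, (∀ j, Measurable (f j)) →
      wtWeakLpNorm (∑ j, (s j)⁻¹)⁻¹ (fun _ => 1) (gStar lam K f)
        ≤ C * ∏ j, wtLpNorm (s j) (fun _ => 1) (f j)

/-- `ω ∈ A_p^θ(φ)` (with the `A_1^θ(φ)` convention for `p = 1`). -/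
def memApTheta (p θ : ℝ) (ω : Rn n → ℝ) : Prop :=
  if p = 1 then
    ∃ C > 0, ∀ (c : Rn n) (r : ℝ), 0 < r →
      (phiFac θ c r)⁻¹ * (∫ y in cube c r, ω y)
        ≤ C * essInf ω (volume.restrict (cube c r))
  else
    ∃ C > 0, ∀ (c : Rn n) (r : ℝ), 0 < r →
      ((phiFac θ c r)⁻¹ * ∫ y in cube c r, ω y) ^ (1 / p) *
        ((phiFac θ c r)⁻¹ * ∫ y in cube c r, (ω y) ^ (-(1 / (p - 1)))) ^ (1 - 1 / p) ≤ C

/-- `ω ∈ A_p^∞(φ) := ⋃_{θ ≥ 0} A_p^θ(φ)`. -/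
def memApInfty (p : ℝ) (ω : Rn n → ℝ) : Prop := ∃ θ ≥ (0:ℝ), memApTheta p θ ω

/-- `ω ∈ A_∞^∞(φ) := ⋃_{p ≥ 1} A_p^∞(φ)`. -/
def memAInftyInfty (ω : Rn n → ℝ) : Prop := ∃ p ≥ (1:ℝ), memApInfty p ω

/-- `v_{ω⃗} := ∏_j ω_j^{p/p_j}` where `1/p = Σ_j 1/p_j`. -/
def vWeight (p : Fin m → ℝ) (ω : Fin m → Rn n → ℝ) : Rn n → ℝ :=
  fun y => ∏ j, (ω j y) ^ ((∑ i, (p i)⁻¹)⁻¹ / p j)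

/-- The `j`-th factor in the multilinear `A_{p⃗}^θ(φ)` condition (with the
convention `(inf_Q ω_j)⁻¹` for `p_j = 1`). -/
def apFactor (pj θ : ℝ) (ω : Rn n → ℝ) (c : Rn n) (r : ℝ) : ℝ :=
  if pj = 1 then (essInf ω (volume.restrict (cube c r)))⁻¹
  else ((phiFac θ c r)⁻¹ * ∫ y in cube c r, (ω y) ^ (1 - (1 - 1 / pj)⁻¹)) ^ (1 - 1 / pj)

/-- `ω⃗ ∈ A_{p⃗}^θ(φ)`. -/
def memMulApTheta (p : Fin m → ℝ) (θ : ℝ) (ω : Fin m → Rn n → ℝ) : Prop :=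
  ∃ C > 0, ∀ (c : Rn n) (r : ℝ), 0 < r →
    ((phiFac θ c r)⁻¹ * ∫ y in cube c r, vWeight p ω y) ^ (∑ i, (p i)⁻¹) *
      ∏ j, apFactor (p j) θ (ω j) c r ≤ C

/-- `ω⃗ ∈ A_{p⃗}^∞(φ) := ⋃_{θ ≥ 0} A_{p⃗}^θ(φ)`. -/
def memMulApInfty (p : Fin m → ℝ) (ω : Fin m → Rn n → ℝ) : Prop :=
  ∃ θ ≥ (0:ℝ), memMulApTheta p θ ω

/-- The `BMO_θ(φ)` "norm" of `b`. -/
def bmoNorm (θ : ℝ) (b : Rn n → ℝ) : ℝ :=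
  ⨆ c : Rn n, ⨆ r : {r : ℝ // 0 < r},
    (phiFac θ c (r : ℝ))⁻¹ * ∫ y in cube c (r : ℝ), |b y - avgOn (cube c (r : ℝ)) b|

/-- `b ∈ BMO_θ(φ)`. -/
def memBMO (θ : ℝ) (b : Rn n → ℝ) : Prop :=
  ∃ C : ℝ, ∀ (c : Rn n) (r : ℝ), 0 < r →
    (phiFac θ c r)⁻¹ * (∫ y in cube c r, |b y - avgOn (cube c r) b|) ≤ C

/-- The multilinear commutator `g^*_{λ,Σb⃗}`. -/
def gStarCommSum (lam : ℝ) (K : Rn n → (Fin m → Rn n) → ℝ) (b f : Fin m → Rn n → ℝ)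
    (x : Rn n) : ℝ :=
  ∑ j, gStar lam K (Function.update f j fun y => (b j x - b j y) * f j y) x

/-- The iterated commutator `g^*_{λ,Πb⃗_S}` associated with a subset `S` of indices. -/
def gStarIterOn (lam : ℝ) (K : Rn n → (Fin m → Rn n) → ℝ) (S : Finset (Fin m))
    (b f : Fin m → Rn n → ℝ) (x : Rn n) : ℝ :=
  gStar lam K (fun j y => (if j ∈ S then b j x - b j y else 1) * f j y) x

/-- The full multilinear iterated commutator `g^*_{λ,Πb⃗}`. -/
def gStarIter (lam : ℝ) (K : Rn n → (Fin m → Rn n) → ℝ) (b f : Fin m → Rn n → ℝ)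
    (x : Rn n) : ℝ :=
  gStarIterOn lam K Finset.univ b f x

/-- Bounded measurable function with compact support. -/
def NiceFun (f : Rn n → ℝ) : Prop :=
  Measurable f ∧ (∃ M, ∀ y, |f y| ≤ M) ∧ HasCompactSupport f

section AuxStatement8

lemma cube_eq {n : ℕ} (c : Rn n) (r : ℝ) :
    cube c r = ((MeasurableEquiv.toLp 2 (Fin n → ℝ)).symm) ⁻¹'
      (Set.univ.pi fun i => Icc (c i - r/2) (c i + r/2)) := by
  ext y
  simp only [cube, mem_setOf_eq, mem_preimage, Set.mem_pi, mem_univ, forall_true_left, mem_Icc,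
    abs_sub_le_iff]
  have hy : ∀ i, ((MeasurableEquiv.toLp 2 (Fin n → ℝ)).symm) y i = y i := fun i => rfl
  constructor
  · intro h i; rw [hy]; constructor <;> linarith [(h i).1, (h i).2]
  · intro h i; have := h i; rw [hy] at this; constructor <;> linarith [this.1, this.2]

lemma volume_cube {n : ℕ} (c : Rn n) (r : ℝ) :
    volume (cube c r) = ENNReal.ofReal r ^ n := by
  rw [cube_eq, MeasurePreserving.measure_preimage
      (EuclideanSpace.volume_preserving_symm_measurableEquiv_toLp (Fin n))
      (MeasurableSet.univ_pi fun i => measurableSet_Icc).nullMeasurableSet,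
    volume_pi_pi]
  have : ∀ i : Fin n, volume (Icc (c i - r/2) (c i + r/2)) = ENNReal.ofReal r := by
    intro i; rw [Real.volume_Icc]; congr 1; ring
  simp [this]

lemma volume_cube_toReal {n : ℕ} (c : Rn n) (r : ℝ) (hr : 0 ≤ r) :
    (volume (cube c r)).toReal = r ^ n := by
  rw [volume_cube]
  simp [ENNReal.toReal_pow, ENNReal.toReal_ofReal hr]

lemma isCompact_cube {n : ℕ} (c : Rn n) (r : ℝ) : IsCompact (cube c r) := by
  have h : cube c r = (PiLp.continuousLinearEquiv 2 ℝ (fun _ : Fin n => ℝ)).symm ''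
      (Set.univ.pi fun i => Icc (c i - r/2) (c i + r/2)) := by
    rw [cube_eq]
    ext y
    simp only [mem_preimage, mem_image]
    constructor
    · intro h
      exact ⟨(PiLp.continuousLinearEquiv 2 ℝ (fun _ : Fin n => ℝ)) y, h, rfl⟩
    · rintro ⟨x, hx, rfl⟩
      exact hx
  rw [h]
  exact (isCompact_univ_pi fun i => isCompact_Icc).image
    (PiLp.continuousLinearEquiv 2 ℝ (fun _ : Fin n => ℝ)).symm.continuous

lemma measurableSet_cube {n : ℕ} (c : Rn n) (r : ℝ) : MeasurableSet (cube c r) :=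
  (isCompact_cube c r).isClosed.measurableSet

lemma norm_sub_le_of_mem_cube {n : ℕ} {c : Rn n} {r : ℝ} (hr : 0 ≤ r) {y : Rn n}
    (hy : y ∈ cube c r) : ‖y - c‖ ≤ Real.sqrt n * r := by
  rw [EuclideanSpace.norm_eq]
  have h1 : ∑ i, ‖(y - c) i‖ ^ 2 ≤ ∑ _i : Fin n, r ^ 2 := by
    apply Finset.sum_le_sum
    intro i _
    have := hy i
    have h2 : ‖(y - c) i‖ = |y i - c i| := rfl
    rw [h2]
    calc |y i - c i| ^ 2 ≤ (r/2) ^ 2 := by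
          apply sq_le_sq' <;> [linarith [abs_nonneg (y i - c i), this]; linarith]
      _ ≤ r ^ 2 := by nlinarith
  calc Real.sqrt (∑ i, ‖(y - c) i‖ ^ 2) ≤ Real.sqrt (∑ _i : Fin n, r ^ 2) :=
        Real.sqrt_le_sqrt h1
    _ = Real.sqrt n * r := by
        rw [Finset.sum_const, Finset.card_univ, Fintype.card_fin, nsmul_eq_mul,
          Real.sqrt_mul (by positivity), Real.sqrt_sq hr]

section Wt
variable {p γ : ℝ} (hp : 1 < p) (hγ : 0 < γ)

lemma omega_cont {n : ℕ} (hγ : 0 < γ) : Continuous fun x : Rn n => 1 + ‖x‖ ^ γ := by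
  apply continuous_const.add
  exact (continuous_norm.rpow_const fun x => Or.inr hγ.le)

lemma omega_one_le {n : ℕ} (x : Rn n) : 1 ≤ 1 + ‖x‖ ^ γ := by
  have := Real.rpow_nonneg (norm_nonneg x) γ; linarith

lemma omega_pos {n : ℕ} (x : Rn n) : 0 < 1 + ‖x‖ ^ γ :=
  lt_of_lt_of_le one_pos (omega_one_le x)

lemma sigma_cont {n : ℕ} (hγ : 0 < γ) :
    Continuous fun x : Rn n => (1 + ‖x‖ ^ γ) ^ (-(1 / (p - 1))) :=
  (omega_cont hγ).rpow_const fun x => Or.inl (omega_pos x).ne'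

lemma sigma_le_one {n : ℕ} (hp : 1 < p) (x : Rn n) :
    (1 + ‖x‖ ^ γ) ^ (-(1 / (p - 1))) ≤ 1 :=
  Real.rpow_le_one_of_one_le_of_nonpos (omega_one_le x)
    (by rw [neg_nonpos]; exact div_nonneg zero_le_one (by linarith))

lemma sigma_pos {n : ℕ} (x : Rn n) : 0 < (1 + ‖x‖ ^ γ) ^ (-(1 / (p - 1))) :=
  Real.rpow_pos_of_pos (omega_pos x) _

lemma integrableOn_omega {n : ℕ} (hγ : 0 < γ) (c : Rn n) (r : ℝ) :
    IntegrableOn (fun x : Rn n => 1 + ‖x‖ ^ γ) (cube c r) :=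
  (omega_cont hγ).continuousOn.integrableOn_compact (isCompact_cube c r)

-- pointwise bound : σ x ≤ 2^(γ/(p-1)) * (1+‖x‖)^(-(γ/(p-1)))
lemma sigma_ptwise {n : ℕ} (hp : 1 < p) (hγ : 0 < γ) (x : Rn n) :
    (1 + ‖x‖ ^ γ) ^ (-(1 / (p - 1))) ≤
      2 ^ (γ / (p - 1)) * (1 + ‖x‖) ^ (-(γ / (p - 1))) := by
  have hp1 : 0 < p - 1 := by linarith
  have hx : (0:ℝ) ≤ ‖x‖ := norm_nonneg x
  have key : (1 + ‖x‖) ^ γ ≤ 2 ^ γ * (1 + ‖x‖ ^ γ) := by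
    have h1 : 1 + ‖x‖ ≤ 2 * max 1 ‖x‖ := by
      rcases le_total ‖x‖ 1 with h | h
      · rw [max_eq_left h]; linarith
      · rw [max_eq_right h]; linarith
    calc (1 + ‖x‖) ^ γ ≤ (2 * max 1 ‖x‖) ^ γ :=
          Real.rpow_le_rpow (by linarith) h1 hγ.le
      _ = 2 ^ γ * (max 1 ‖x‖) ^ γ := Real.mul_rpow (by norm_num) (le_max_of_le_left zero_le_one)
      _ ≤ 2 ^ γ * (1 + ‖x‖ ^ γ) := by
          gcongr
          rcases le_total ‖x‖ 1 with h | h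
          · rw [max_eq_left h, Real.one_rpow]
            have := Real.rpow_nonneg hx γ; linarith
          · rw [max_eq_right h]
            have : (1:ℝ) ≤ ‖x‖ ^ γ := Real.one_le_rpow h hγ.le
            linarith
  have h2 : 2 ^ (-γ) * (1 + ‖x‖) ^ γ ≤ 1 + ‖x‖ ^ γ := by
    rw [Real.rpow_neg (by norm_num)]
    have h2p : (0:ℝ) < 2 ^ γ := Real.rpow_pos_of_pos two_pos γ
    rw [inv_mul_le_iff₀ h2p]  -- maybe name differs
    linarith [key]
  have hposL : (0:ℝ) < 2 ^ (-γ) * (1 + ‖x‖) ^ γ := by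
    positivity
  calc (1 + ‖x‖ ^ γ) ^ (-(1 / (p - 1)))
      ≤ (2 ^ (-γ) * (1 + ‖x‖) ^ γ) ^ (-(1 / (p - 1))) :=
        Real.rpow_le_rpow_of_nonpos hposL h2
          (by rw [neg_nonpos]; exact div_nonneg zero_le_one (by linarith))
    _ = 2 ^ (γ / (p - 1)) * (1 + ‖x‖) ^ (-(γ / (p - 1))) := by
        rw [Real.mul_rpow (by positivity) (by positivity),
          ← Real.rpow_mul (by norm_num : (0:ℝ) ≤ 2),
          ← Real.rpow_mul (by positivity : (0:ℝ) ≤ 1 + ‖x‖)]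
        congr 1
        · congr 1; field_simp
        · congr 1
          field_simp
end Wt

section Wt2
open FiniteDimensional Module

lemma integrable_sigma {n : ℕ} {p γ : ℝ} (hp : 1 < p) (hγ : (n:ℝ) * (p-1) < γ) :
    Integrable (fun x : Rn n => (1 + ‖x‖ ^ γ) ^ (-(1 / (p - 1)))) := by
  have hp1 : 0 < p - 1 := by linarith
  have hγ0 : 0 < γ := lt_of_le_of_lt (by positivity) hγ
  have hfin : (finrank ℝ (Rn n) : ℝ) < γ / (p - 1) := by
    have : finrank ℝ (Rn n) = n := finrank_euclideanSpace_fin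
    rw [this, lt_div_iff₀ hp1]
    linarith
  have hg : Integrable (fun x : Rn n => 2 ^ (γ / (p - 1)) * (1 + ‖x‖) ^ (-(γ / (p - 1)))) :=
    (integrable_one_add_norm hfin).const_mul _
  refine hg.mono' ((sigma_cont hγ0).aestronglyMeasurable) ?_
  filter_upwards with x
  rw [Real.norm_eq_abs, abs_of_pos (sigma_pos x)]
  exact sigma_ptwise hp hγ0 x

lemma volume_cube_lt_top {n : ℕ} (c : Rn n) (r : ℝ) : volume (cube c r) < ⊤ := by
  rw [volume_cube]; exact ENNReal.pow_lt_top ENNReal.ofReal_lt_top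

lemma setIntegral_cube_le {n : ℕ} {c : Rn n} {r : ℝ} (hr : 0 ≤ r) {f : Rn n → ℝ} {M : ℝ}
    (hf : IntegrableOn f (cube c r)) (hM : ∀ y ∈ cube c r, f y ≤ M) :
    ∫ y in cube c r, f y ≤ r ^ n * M := by
  have h := setIntegral_mono_on hf (integrableOn_const (volume_cube_lt_top c r).ne)
    (measurableSet_cube c r) hM
  rw [setIntegral_const, measureReal_def, volume_cube_toReal c r hr, smul_eq_mul] at h
  exact h

lemma setIntegral_cube_ge {n : ℕ} {c : Rn n} {r : ℝ} (hr : 0 ≤ r) {f : Rn n → ℝ} {m : ℝ}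
    (hf : IntegrableOn f (cube c r)) (hm : ∀ y ∈ cube c r, m ≤ f y) :
    r ^ n * m ≤ ∫ y in cube c r, f y := by
  have h := setIntegral_mono_on (integrableOn_const (volume_cube_lt_top c r).ne) hf
    (measurableSet_cube c r) hm
  rw [setIntegral_const, measureReal_def, volume_cube_toReal c r hr, smul_eq_mul] at h
  exact h

lemma norm_le_of_mem_cube {n : ℕ} {c : Rn n} {r : ℝ} (hr : 0 ≤ r) {y : Rn n}
    (hy : y ∈ cube c r) : ‖y‖ ≤ ‖c‖ + Real.sqrt n * r := by
  have h := norm_sub_le_of_mem_cube hr hy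
  calc ‖y‖ = ‖c + (y - c)‖ := by rw [add_sub_cancel]
    _ ≤ ‖c‖ + ‖y - c‖ := norm_add_le _ _
    _ ≤ ‖c‖ + Real.sqrt n * r := by linarith

lemma norm_ge_of_mem_cube {n : ℕ} {c : Rn n} {r : ℝ} (hr : 0 ≤ r) {y : Rn n}
    (hy : y ∈ cube c r) : ‖c‖ - Real.sqrt n * r ≤ ‖y‖ := by
  have h := norm_sub_le_of_mem_cube hr hy
  have := norm_sub_norm_le c y
  have h2 : ‖c - y‖ = ‖y - c‖ := norm_sub_rev c y
  linarith [norm_sub_norm_le c y]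

end Wt2

section Phi
variable {n : ℕ}

lemma phiFac_eq (θ : ℝ) (c : Rn n) {r : ℝ} (hr : 0 ≤ r) :
    phiFac θ c r = (1 + r) ^ θ * r ^ n := by
  rw [phiFac, volume_cube_toReal c r hr]

lemma phiFac_pos (θ : ℝ) (c : Rn n) {r : ℝ} (hr : 0 < r) : 0 < phiFac θ c r := by
  rw [phiFac_eq θ c hr.le]
  exact mul_pos (Real.rpow_pos_of_pos (by linarith) θ) (pow_pos hr n)

lemma inv_phi_mul_le {θ : ℝ} {c : Rn n} {r : ℝ} (hr : 0 < r) {f : Rn n → ℝ} {M : ℝ}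
    (hf : IntegrableOn f (cube c r)) (hM : ∀ y ∈ cube c r, f y ≤ M) :
    (phiFac θ c r)⁻¹ * ∫ y in cube c r, f y ≤ ((1 + r) ^ θ)⁻¹ * M := by
  rw [phiFac_eq θ c hr.le, mul_inv, mul_assoc]
  have hrn : (0:ℝ) < r ^ n := pow_pos hr n
  have hpw : (0:ℝ) < (1 + r) ^ θ := Real.rpow_pos_of_pos (by linarith) θ
  have h := setIntegral_cube_le hr.le hf hM
  have h2 : (r ^ n)⁻¹ * ∫ y in cube c r, f y ≤ M := by
    rw [inv_mul_le_iff₀ hrn, mul_comm]; linarith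
  exact mul_le_mul_of_nonneg_left h2 (by positivity)

lemma le_inv_phi_mul {θ : ℝ} {c : Rn n} {r : ℝ} (hr : 0 < r) {f : Rn n → ℝ} {m : ℝ}
    (hf : IntegrableOn f (cube c r)) (hm : ∀ y ∈ cube c r, m ≤ f y) :
    ((1 + r) ^ θ)⁻¹ * m ≤ (phiFac θ c r)⁻¹ * ∫ y in cube c r, f y := by
  rw [phiFac_eq θ c hr.le, mul_inv, mul_assoc]
  have hrn : (0:ℝ) < r ^ n := pow_pos hr n
  have hpw : (0:ℝ) < (1 + r) ^ θ := Real.rpow_pos_of_pos (by linarith) θ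
  have h := setIntegral_cube_ge hr.le hf hm
  have h2 : m ≤ (r ^ n)⁻¹ * ∫ y in cube c r, f y := by
    rw [le_inv_mul_iff₀ hrn, mul_comm]; linarith
  exact mul_le_mul_of_nonneg_left h2 (by positivity)

end Phi

lemma two_pow_mul {γ q : ℝ} (X : ℝ) (hX : 0 < X) (hq : 0 ≤ q) :
    ((2:ℝ) ^ (-γ) * X) ^ (-q) = 2 ^ (γ * q) * X ^ (-q) := by
  rw [Real.mul_rpow (by positivity) hX.le, ← Real.rpow_mul (by norm_num : (0:ℝ) ≤ 2)]
  congr 2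
  ring

set_option maxHeartbeats 1000000 in
lemma pos_core {n : ℕ} (hn : 1 ≤ n) {p γ : ℝ} (hp : 1 < p) (hγ : (n:ℝ)*(p-1) < γ) :
    ∃ C > 0, ∀ (c : Rn n) (r : ℝ), 0 < r →
      ((phiFac γ c r)⁻¹ * ∫ y in cube c r, (1 + ‖y‖^γ)) ^ (1/p) *
        ((phiFac γ c r)⁻¹ * ∫ y in cube c r, (1 + ‖y‖^γ) ^ (-(1/(p-1)))) ^ (1-1/p) ≤ C := by
  have hp1 : 0 < p - 1 := by linarith
  have hγ0 : 0 < γ := lt_of_le_of_lt (by positivity) hγ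
  have hp0 : 0 < 1/p := by positivity
  have hq0 : 0 ≤ 1 - 1/p := by
    rw [sub_nonneg, div_le_one (by linarith)]; linarith
  set sn := Real.sqrt n with hsn
  have hsn1 : 1 ≤ sn := by
    rw [hsn, show (1:ℝ) = Real.sqrt 1 from Real.sqrt_one.symm]
    exact Real.sqrt_le_sqrt (by exact_mod_cast hn)
  have hI : Integrable (fun x : Rn n => (1 + ‖x‖^γ) ^ (-(1/(p-1)))) := integrable_sigma hp hγ
  set I := ∫ x : Rn n, (1 + ‖x‖^γ) ^ (-(1/(p-1))) with hIdef
  have hI0 : 0 ≤ I := integral_nonneg fun x => (sigma_pos x).le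
  have h3sn : (0:ℝ) < 2 * (3*sn)^γ := by positivity
  have hmaxI : (0:ℝ) < max 1 I := lt_of_lt_of_le one_pos (le_max_left _ _)
  set C1 := (2*(3*sn)^γ) ^ (1/p) * (max 1 I) ^ (1-1/p) with hC1
  set C2 := ((3/2:ℝ)^γ) ^ (1/p) * ((2:ℝ)^(γ * (1/(p-1)))) ^ (1-1/p) with hC2
  have hC1p : 0 < C1 := mul_pos (Real.rpow_pos_of_pos h3sn _) (Real.rpow_pos_of_pos hmaxI _)
  refine ⟨max C1 C2, lt_of_lt_of_le hC1p (le_max_left _ _), fun c r hr => ?_⟩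
  have hr1 : (0:ℝ) < 1 + r := by linarith
  have h1r : (1:ℝ) ≤ (1+r)^γ := Real.one_le_rpow (by linarith) hγ0.le
  have h1rpos : (0:ℝ) < (1+r)^γ := by linarith
  have hΦpos := phiFac_pos γ c hr
  have hω_int := integrableOn_omega hγ0 c r
  have hσ_int : IntegrableOn (fun x : Rn n => (1 + ‖x‖^γ) ^ (-(1/(p-1)))) (cube c r) :=
    hI.integrableOn
  have hW0 : 0 ≤ (phiFac γ c r)⁻¹ * ∫ y in cube c r, (1 + ‖y‖^γ) := by
    apply mul_nonneg (by positivity)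
    exact setIntegral_nonneg (measurableSet_cube c r) fun y _ => (omega_pos y).le
  have hS0 : 0 ≤ (phiFac γ c r)⁻¹ * ∫ y in cube c r, (1 + ‖y‖^γ) ^ (-(1/(p-1))) := by
    apply mul_nonneg (by positivity)
    exact setIntegral_nonneg (measurableSet_cube c r) fun y _ => (sigma_pos y).le
  by_cases hc : ‖c‖ ≤ 2 * sn * r
  · -- case (i)
    have hA : (phiFac γ c r)⁻¹ * ∫ y in cube c r, (1 + ‖y‖^γ) ≤ 2*(3*sn)^γ := by
      have hM : ∀ y ∈ cube c r, (1 + ‖y‖^γ) ≤ 1 + (3*sn*r)^γ := by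
        intro y hy
        have h1 : ‖y‖ ≤ ‖c‖ + sn * r := norm_le_of_mem_cube hr.le hy
        have h2 : ‖y‖ ≤ 3*sn*r := by linarith
        have := Real.rpow_le_rpow (norm_nonneg y) h2 hγ0.le
        linarith
      refine (inv_phi_mul_le (θ := γ) hr hω_int hM).trans ?_
      have key : 1 + (3*sn*r)^γ ≤ 2*(3*sn)^γ * (1+r)^γ := by
        have hb : (0:ℝ) < 3*sn := by linarith
        have h1 : (3*sn*r)^γ ≤ (3*sn*(1+r))^γ :=
          Real.rpow_le_rpow (by positivity) (by nlinarith) hγ0.le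
        have h2 : (3*sn*(1+r))^γ = (3*sn)^γ * (1+r)^γ :=
          Real.mul_rpow hb.le hr1.le
        have h3 : (1:ℝ) ≤ (3*sn)^γ * (1+r)^γ := by
          have : (1:ℝ) ≤ (3*sn)^γ := Real.one_le_rpow (by linarith) hγ0.le
          nlinarith
        nlinarith [h1, h2.le, h2.ge]
      rw [inv_mul_le_iff₀ h1rpos]
      linarith [key, mul_comm ((1+r)^γ) (2*(3*sn)^γ)]
    have hB : (phiFac γ c r)⁻¹ * (∫ y in cube c r, (1 + ‖y‖^γ) ^ (-(1/(p-1)))) ≤ max 1 I := by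
      rcases le_total r 1 with h | h
      · have hM : ∀ y ∈ cube c r, (1 + ‖y‖^γ) ^ (-(1/(p-1))) ≤ 1 := fun y _ => sigma_le_one hp y
        refine (inv_phi_mul_le (θ := γ) hr hσ_int hM).trans
          (le_trans ?_ (le_max_left 1 I))
        rw [mul_one, inv_le_one_iff₀]
        right; exact h1r
      · have hSI : ∫ y in cube c r, (1 + ‖y‖^γ) ^ (-(1/(p-1))) ≤ I :=
          setIntegral_le_integral hI (Filter.Eventually.of_forall fun y => (sigma_pos y).le)
        have hSnn : 0 ≤ ∫ y in cube c r, (1 + ‖y‖^γ) ^ (-(1/(p-1))) :=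
          setIntegral_nonneg (measurableSet_cube c r) fun y _ => (sigma_pos y).le
        have hΦ1 : (1:ℝ) ≤ phiFac γ c r := by
          rw [phiFac_eq γ c hr.le]
          have hrn : (1:ℝ) ≤ r^n := one_le_pow₀ h
          nlinarith
        calc (phiFac γ c r)⁻¹ * (∫ y in cube c r, (1 + ‖y‖^γ) ^ (-(1/(p-1))))
            ≤ 1 * I := mul_le_mul (inv_le_one_of_one_le₀ hΦ1) hSI hSnn zero_le_one
          _ ≤ max 1 I := by rw [one_mul]; exact le_max_right _ _
    calc ((phiFac γ c r)⁻¹ * ∫ y in cube c r, (1 + ‖y‖^γ)) ^ (1/p) *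
        ((phiFac γ c r)⁻¹ * ∫ y in cube c r, (1 + ‖y‖^γ) ^ (-(1/(p-1)))) ^ (1-1/p)
        ≤ (2*(3*sn)^γ) ^ (1/p) * (max 1 I) ^ (1-1/p) :=
          mul_le_mul (Real.rpow_le_rpow hW0 hA hp0.le) (Real.rpow_le_rpow hS0 hB hq0)
            (Real.rpow_nonneg hS0 _) (Real.rpow_nonneg (by positivity) _)
      _ ≤ max C1 C2 := le_max_left _ _
  · -- case (ii)
    push_neg at hc
    have hcpos : (0:ℝ) < ‖c‖ := lt_trans (by positivity) hc
    set X := 1 + ‖c‖^γ with hX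
    have hXpos : (0:ℝ) < X := omega_pos c
    have h32 : (1:ℝ) ≤ (3/2:ℝ)^γ := Real.one_le_rpow (by norm_num) hγ0.le
    have hA : (phiFac γ c r)⁻¹ * ∫ y in cube c r, (1 + ‖y‖^γ) ≤ (3/2:ℝ)^γ * X := by
      have hM : ∀ y ∈ cube c r, (1 + ‖y‖^γ) ≤ (3/2:ℝ)^γ * X := by
        intro y hy
        have h1 : ‖y‖ ≤ ‖c‖ + sn * r := norm_le_of_mem_cube hr.le hy
        have h2 : ‖y‖ ≤ (3/2) * ‖c‖ := by nlinarith
        have h3 : ‖y‖^γ ≤ ((3/2) * ‖c‖)^γ := Real.rpow_le_rpow (norm_nonneg y) h2 hγ0.le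
        have h4 : ((3/2) * ‖c‖)^γ = (3/2:ℝ)^γ * ‖c‖^γ := Real.mul_rpow (by norm_num) (norm_nonneg c)
        have h5 : (3/2:ℝ)^γ * X = (3/2:ℝ)^γ + (3/2:ℝ)^γ * ‖c‖^γ := by rw [hX]; ring
        rw [h5]
        have h6 := Real.rpow_nonneg (norm_nonneg c) γ
        nlinarith
      refine (inv_phi_mul_le (θ := γ) hr hω_int hM).trans ?_
      rw [inv_mul_le_iff₀ h1rpos]
      nlinarith [Real.rpow_nonneg (norm_nonneg c) γ, mul_le_mul_of_nonneg_left h1r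
        (le_of_lt (mul_pos (lt_of_lt_of_le one_pos h32) hXpos))]
    have hB : (phiFac γ c r)⁻¹ * (∫ y in cube c r, (1 + ‖y‖^γ) ^ (-(1/(p-1))))
        ≤ (2:ℝ)^(γ * (1/(p-1))) * X ^ (-(1/(p-1))) := by
      have hM : ∀ y ∈ cube c r, (1 + ‖y‖^γ) ^ (-(1/(p-1)))
          ≤ (2:ℝ)^(γ * (1/(p-1))) * X ^ (-(1/(p-1))) := by
        intro y hy
        have h1 : ‖c‖ - sn * r ≤ ‖y‖ := norm_ge_of_mem_cube hr.le hy
        have h2 : ‖c‖/2 ≤ ‖y‖ := by nlinarith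
        have h3 : (‖c‖/2)^γ ≤ ‖y‖^γ := Real.rpow_le_rpow (by positivity) h2 hγ0.le
        have h4 : (‖c‖/2)^γ = 2^(-γ) * ‖c‖^γ := by
          rw [Real.div_rpow (norm_nonneg c) (by norm_num), Real.rpow_neg (by norm_num)]
          ring
        have h5 : 2^(-γ) * X ≤ 1 + ‖y‖^γ := by
          have h2γ : (2:ℝ)^(-γ) ≤ 1 := Real.rpow_le_one_of_one_le_of_nonpos (by norm_num) (by linarith)
          have h2γ0 : (0:ℝ) < (2:ℝ)^(-γ) := Real.rpow_pos_of_pos two_pos _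
          rw [hX]
          nlinarith [h3, h4.le, h4.ge]
        calc (1 + ‖y‖^γ) ^ (-(1/(p-1))) ≤ ((2:ℝ)^(-γ) * X) ^ (-(1/(p-1))) :=
              Real.rpow_le_rpow_of_nonpos (by positivity) h5
                (by rw [neg_nonpos]; exact div_nonneg zero_le_one (by linarith))
          _ = (2:ℝ)^(γ * (1/(p-1))) * X ^ (-(1/(p-1))) :=
              two_pow_mul X hXpos (div_nonneg zero_le_one (by linarith))
      refine (inv_phi_mul_le (θ := γ) hr hσ_int hM).trans ?_
      rw [inv_mul_le_iff₀ h1rpos]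
      have hRHS : (0:ℝ) ≤ (2:ℝ)^(γ * (1/(p-1))) * X ^ (-(1/(p-1))) := by positivity
      nlinarith [mul_le_mul_of_nonneg_left h1r hRHS]
    have hW0' : (0:ℝ) ≤ (3/2:ℝ)^γ * X := by positivity
    have hS0' : (0:ℝ) ≤ (2:ℝ)^(γ * (1/(p-1))) * X ^ (-(1/(p-1))) := by positivity
    have key : ((3/2:ℝ)^γ * X) ^ (1/p) * ((2:ℝ)^(γ * (1/(p-1))) * X ^ (-(1/(p-1)))) ^ (1-1/p)
        = C2 * (X ^ (1/p) * X ^ (-(1/p))) := by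
      rw [Real.mul_rpow (by positivity) hXpos.le,
        Real.mul_rpow (by positivity) (by positivity),
        ← Real.rpow_mul hXpos.le]
      have hexp : -(1/(p-1)) * (1-1/p) = -(1/p) := by
        field_simp
      rw [hexp, hC2]
      ring
    have hX1 : X ^ (1/p) * X ^ (-(1/p)) = 1 := by
      rw [← Real.rpow_add hXpos]
      simp
    calc ((phiFac γ c r)⁻¹ * ∫ y in cube c r, (1 + ‖y‖^γ)) ^ (1/p) *
        ((phiFac γ c r)⁻¹ * ∫ y in cube c r, (1 + ‖y‖^γ) ^ (-(1/(p-1)))) ^ (1-1/p)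
        ≤ ((3/2:ℝ)^γ * X) ^ (1/p) * ((2:ℝ)^(γ * (1/(p-1))) * X ^ (-(1/(p-1)))) ^ (1-1/p) :=
          mul_le_mul (Real.rpow_le_rpow hW0 hA hp0.le) (Real.rpow_le_rpow hS0 hB hq0)
            (Real.rpow_nonneg hS0 _) (Real.rpow_nonneg hW0' _)
      _ = C2 * (X ^ (1/p) * X ^ (-(1/p))) := key
      _ = C2 := by rw [hX1, mul_one]
      _ ≤ max C1 C2 := le_max_right _ _

lemma abs_coord_le_norm {n : ℕ} (y : Rn n) (i : Fin n) : |y i| ≤ ‖y‖ := by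
  rw [EuclideanSpace.norm_eq]
  have h1 : |y i| = Real.sqrt (‖y i‖^2) := by
    rw [Real.norm_eq_abs, Real.sqrt_sq_eq_abs, abs_abs]
  rw [h1]
  apply Real.sqrt_le_sqrt
  exact Finset.single_le_sum (fun j _ => sq_nonneg ‖y j‖) (Finset.mem_univ i)

set_option maxHeartbeats 1000000 in
lemma neg_core {n : ℕ} (hn : 1 ≤ n) {p γ : ℝ} (hp : 1 < p) (hγ : (n:ℝ)*(p-1) < γ) :
    ¬ ∃ C > 0, ∀ (c : Rn n) (r : ℝ), 0 < r →
      ((phiFac 0 c r)⁻¹ * ∫ y in cube c r, (1 + ‖y‖^γ)) ^ (1/p) *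
        ((phiFac 0 c r)⁻¹ * ∫ y in cube c r, (1 + ‖y‖^γ) ^ (-(1/(p-1)))) ^ (1-1/p) ≤ C := by
  rintro ⟨C, hC, h⟩
  have hp1 : 0 < p - 1 := by linarith
  have hγ0 : 0 < γ := lt_of_le_of_lt (by positivity) hγ
  have hp0 : 0 < 1/p := by positivity
  have hq0 : 0 ≤ 1 - 1/p := by
    rw [sub_nonneg, div_le_one (by linarith)]; linarith
  set sn := Real.sqrt n with hsn
  have hsn0 : 0 ≤ sn := Real.sqrt_nonneg _
  have hI : Integrable (fun x : Rn n => (1 + ‖x‖^γ) ^ (-(1/(p-1)))) := integrable_sigma hp hγ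
  set κ := (1 + sn^γ) ^ (-(1/(p-1))) with hκ
  have hsnpos : (0:ℝ) < 1 + sn^γ := by positivity
  have hκpos : 0 < κ := Real.rpow_pos_of_pos hsnpos _
  set e := (γ - (n:ℝ)*(p-1))/p with he
  have hepos : 0 < e := div_pos (by linarith) (by linarith)
  set K1 := ((4:ℝ)^n)⁻¹ * (4:ℝ)^(-γ) with hK1
  have hK1pos : 0 < K1 := by positivity
  set a := K1 ^ (1/p) * κ ^ (1-1/p) with ha
  have hapos : 0 < a := mul_pos (Real.rpow_pos_of_pos hK1pos _) (Real.rpow_pos_of_pos hκpos _)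
  set r := max 1 ((C/a + 1) ^ (1/e)) with hrdef
  have hr1 : (1:ℝ) ≤ r := le_max_left _ _
  have hr : (0:ℝ) < r := lt_of_lt_of_le one_pos hr1
  have hCa0 : (0:ℝ) ≤ C/a + 1 := by positivity
  have hre : C/a + 1 ≤ r ^ e := by
    calc C/a + 1 = ((C/a + 1) ^ (1/e)) ^ e := by
          rw [one_div, Real.rpow_inv_rpow hCa0 hepos.ne']
      _ ≤ r ^ e := Real.rpow_le_rpow (Real.rpow_nonneg hCa0 _) (le_max_right _ _) hepos.le
  have hkey := h 0 r hr
  -- phiFac 0 0 r = r^n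
  have hΦ0 : phiFac 0 (0 : Rn n) r = r^n := by
    rw [phiFac_eq 0 0 hr.le, Real.rpow_zero, one_mul]
  have hrn : (0:ℝ) < r^n := pow_pos hr n
  -- lower bound for W
  set c₀ : Rn n := (WithLp.equiv 2 (Fin n → ℝ)).symm (fun _ => 3*r/8) with hc₀def
  have hc₀ : ∀ i, c₀ i = 3*r/8 := fun i => rfl
  have hzero : ∀ i, (0 : Rn n) i = 0 := fun i => rfl
  have hSsub : cube c₀ (r/4) ⊆ cube (0 : Rn n) r := by
    intro y hy i
    have h1 := hy i
    rw [hc₀] at h1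
    rw [hzero, sub_zero]
    rw [abs_le] at h1 ⊢
    constructor <;> linarith [h1.1, h1.2]
  have i0 : Fin n := ⟨0, hn⟩
  have hnormlb : ∀ y ∈ cube c₀ (r/4), r/4 ≤ ‖y‖ := by
    intro y hy
    have h1 := hy i0
    rw [hc₀] at h1
    rw [abs_le] at h1
    have h2 : r/4 ≤ |y i0| := by
      rw [abs_of_pos (by linarith [h1.1] : (0:ℝ) < y i0)]
      linarith [h1.1]
    exact h2.trans (abs_coord_le_norm y i0)
  have hWlb : (r/4)^n * (1 + (r/4)^γ) ≤ ∫ y in cube c₀ (r/4), (1 + ‖y‖^γ) := by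
    apply setIntegral_cube_ge (by linarith) (integrableOn_omega hγ0 c₀ (r/4))
    intro y hy
    have := Real.rpow_le_rpow (by linarith) (hnormlb y hy) hγ0.le
    linarith
  have hWmono : ∫ y in cube c₀ (r/4), (1 + ‖y‖^γ) ≤ ∫ y in cube (0:Rn n) r, (1 + ‖y‖^γ) :=
    setIntegral_mono_set (integrableOn_omega hγ0 0 r)
      (Filter.Eventually.of_forall fun y => (omega_pos y).le) hSsub.eventuallyLE
  -- lower bound for S
  have hsub2 : cube (0 : Rn n) 1 ⊆ cube (0 : Rn n) r := by
    intro y hy i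
    have h1 := hy i
    rw [hzero, sub_zero] at h1 ⊢
    exact h1.trans (by linarith)
  have hσlb : ∀ y ∈ cube (0 : Rn n) 1, κ ≤ (1 + ‖y‖^γ) ^ (-(1/(p-1))) := by
    intro y hy
    have h1 : ‖y‖ ≤ ‖(0:Rn n)‖ + sn * 1 := norm_le_of_mem_cube zero_le_one hy
    rw [norm_zero, zero_add, mul_one] at h1
    have h2 : 1 + ‖y‖^γ ≤ 1 + sn^γ := by
      have := Real.rpow_le_rpow (norm_nonneg y) h1 hγ0.le
      linarith
    exact Real.rpow_le_rpow_of_nonpos (omega_pos y) h2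
      (by rw [neg_nonpos]; exact div_nonneg zero_le_one (by linarith))
  have hS1 : κ ≤ ∫ y in cube (0:Rn n) 1, (1 + ‖y‖^γ) ^ (-(1/(p-1))) := by
    have := setIntegral_cube_ge (n := n) (c := 0) (r := 1) zero_le_one
      hI.integrableOn hσlb
    rwa [one_pow, one_mul] at this
  have hSmono : ∫ y in cube (0:Rn n) 1, (1 + ‖y‖^γ) ^ (-(1/(p-1)))
      ≤ ∫ y in cube (0:Rn n) r, (1 + ‖y‖^γ) ^ (-(1/(p-1))) :=
    setIntegral_mono_set hI.integrableOn
      (Filter.Eventually.of_forall fun y => (sigma_pos y).le) hsub2.eventuallyLE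
  -- combine
  have hF1 : K1 * r^γ ≤ (phiFac 0 (0:Rn n) r)⁻¹ * ∫ y in cube (0:Rn n) r, (1 + ‖y‖^γ) := by
    rw [hΦ0]
    have hstep : (r/4)^n * (r/4)^γ ≤ ∫ y in cube (0:Rn n) r, (1 + ‖y‖^γ) := by
      have h4 : (0:ℝ) < (r/4)^γ := Real.rpow_pos_of_pos (by linarith) _
      have h5 : (0:ℝ) < (r/4)^n := pow_pos (by linarith) _
      nlinarith [hWlb, hWmono]
    rw [le_inv_mul_iff₀ hrn]
    have he1 : r^n * (K1 * r^γ) = (r/4)^n * ((4:ℝ)^(-γ) * r^γ) := by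
      rw [hK1, div_pow]
      field_simp
    have he2 : (4:ℝ)^(-γ) * r^γ = (r/4)^γ := by
      rw [Real.div_rpow hr.le (by norm_num), Real.rpow_neg (by norm_num)]
      ring
    rw [he1, he2]
    exact hstep
  have hF2 : κ * (r^n)⁻¹ ≤ (phiFac 0 (0:Rn n) r)⁻¹ *
      ∫ y in cube (0:Rn n) r, (1 + ‖y‖^γ) ^ (-(1/(p-1))) := by
    rw [hΦ0, mul_comm κ _]
    exact mul_le_mul_of_nonneg_left (hS1.trans hSmono) (by positivity)
  have hprod : a * r^e ≤
      ((phiFac 0 (0:Rn n) r)⁻¹ * ∫ y in cube (0:Rn n) r, (1 + ‖y‖^γ)) ^ (1/p) *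
        ((phiFac 0 (0:Rn n) r)⁻¹ *
          ∫ y in cube (0:Rn n) r, (1 + ‖y‖^γ) ^ (-(1/(p-1)))) ^ (1-1/p) := by
    have hb1 : (K1 * r^γ) ^ (1/p) ≤
        ((phiFac 0 (0:Rn n) r)⁻¹ * ∫ y in cube (0:Rn n) r, (1 + ‖y‖^γ)) ^ (1/p) :=
      Real.rpow_le_rpow (by positivity) hF1 hp0.le
    have hb2 : (κ * (r^n)⁻¹) ^ (1-1/p) ≤
        ((phiFac 0 (0:Rn n) r)⁻¹ *
          ∫ y in cube (0:Rn n) r, (1 + ‖y‖^γ) ^ (-(1/(p-1)))) ^ (1-1/p) :=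
      Real.rpow_le_rpow (by positivity) hF2 hq0
    have heq : (K1 * r^γ) ^ (1/p) * (κ * (r^n)⁻¹) ^ (1-1/p) = a * r^e := by
      have hrn' : (r^n : ℝ)⁻¹ = r ^ (-(n:ℝ)) := by
        rw [Real.rpow_neg hr.le, Real.rpow_natCast]
      rw [Real.mul_rpow hK1pos.le (Real.rpow_nonneg hr.le _),
        Real.mul_rpow hκpos.le (by positivity), hrn',
        ← Real.rpow_mul hr.le, ← Real.rpow_mul hr.le, ha]
      have hexp : γ * (1/p) + (-(n:ℝ)) * (1-1/p) = e := by
        rw [he]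
        field_simp
        ring
      rw [mul_mul_mul_comm, ← Real.rpow_add hr, hexp]
    calc a * r^e = (K1 * r^γ) ^ (1/p) * (κ * (r^n)⁻¹) ^ (1-1/p) := heq.symm
      _ ≤ _ := mul_le_mul hb1 hb2 (Real.rpow_nonneg (mul_pos hκpos (by positivity)).le _)
          (Real.rpow_nonneg (le_trans (by positivity) hF1) _)
  have hfinal : C < a * r^e := by
    have : a * (C/a + 1) = C + a := by field_simp
    nlinarith [mul_le_mul_of_nonneg_left hre hapos.le]
  linarith [hprod.trans hkey]

end AuxStatement8

/-- For `γ > n(p-1)`, the weight `ω(x) = 1 + |x|^γ` belongs to `A_p^∞(φ)` but not to the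
classical Muckenhoupt class `A_p` (i.e. `A_p^0(φ)`). -/
theorem statement8 (n : ℕ) (hn : 1 ≤ n) (p γ : ℝ) (hp : 1 < p)
    (hγ : (n : ℝ) * (p - 1) < γ) :
    memApInfty p (fun x : Rn n => 1 + ‖x‖ ^ γ) ∧
      ¬ memApTheta p 0 (fun x : Rn n => 1 + ‖x‖ ^ γ) := by
  have hn1 : (1:ℝ) ≤ n := by exact_mod_cast hn
  have hγ0 : 0 < γ := by nlinarith
  constructor
  · refine ⟨γ, hγ0.le, ?_⟩
    rw [memApTheta, if_neg hp.ne']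
    exact pos_core hn hp hγ
  · intro hmem
    rw [memApTheta, if_neg hp.ne'] at hmem
    exact neg_core hn hp hγ hmem

end
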